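/- Let X be an integrable real random variable with distribution function F and quantile function F⁻¹(u) = inf{x : F(x) ≥ u}. Then for every p ∈ (0,1): ∫_p^1 F⁻¹(t) dt = inf_{t∈ℝ} { E[(X − t)₊] + t(1 − p) }, and the infimum is attained at any t with F(t) = p. -/

import Mathlib

open MeasureTheory

open Set Filter Topology in
/-- Legendre-duality identity linking upper quantile integrals to
stop-loss transforms: `∫_p^1 F⁻¹(t) dt = inf_t { E[(X − t)₊] + t(1 − p) }`,
with the infimum attained at any `t` with `F(t) = p`. -/
theorem quantile_integral_eq_inf_stop_loss
    {Ω : Type*} [MeasurableSpace Ω] (μ : Measure Ω) [IsProbabilityMeasure μ]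
    (X : Ω → ℝ) (hX : Integrable X μ)
    (F : ℝ → ℝ) (hF : ∀ x, F x = (μ {ω | X ω ≤ x}).toReal)
    (Finv : ℝ → ℝ) (hFinv : ∀ u, Finv u = sInf {x : ℝ | u ≤ F x})
    (p : ℝ) (hp : p ∈ Set.Ioo (0 : ℝ) 1) :
    (∫ t in p..1, Finv t) = (⨅ t : ℝ, ((∫ ω, max (X ω - t) 0 ∂μ) + t * (1 - p))) ∧
      ∀ t : ℝ, F t = p →
        (∫ t in p..1, Finv t) = (∫ ω, max (X ω - t) 0 ∂μ) + t * (1 - p) := by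
  have hXm : AEMeasurable X μ := hX.aemeasurable
  set ν := μ.map X with hν
  have : IsProbabilityMeasure ν := Measure.isProbabilityMeasure_map hXm
  have hFc : ∀ x, F x = ProbabilityTheory.cdf ν x := by
    intro x
    rw [hF, ProbabilityTheory.cdf_eq_real, measureReal_def, hν,
      Measure.map_apply₀ hXm measurableSet_Iic.nullMeasurableSet]
    rfl
  have hmono : Monotone F := fun a b hab => by
    rw [hFc, hFc]; exact ProbabilityTheory.monotone_cdf ν hab
  have hrc : ∀ a, Tendsto F (𝓝[>] a) (𝓝 (F a)) := by
    intro a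
    have h1 : ContinuousWithinAt (ProbabilityTheory.cdf ν) (Ici a) a :=
      (ProbabilityTheory.cdf ν).right_continuous a
    have h2 : Tendsto F (𝓝[≥] a) (𝓝 (F a)) := by
      rw [hFc]
      refine h1.congr' ?_ |>.mono_left le_rfl
      · filter_upwards with x using (hFc x).symm
    exact h2.mono_left (nhdsWithin_mono _ Ioi_subset_Ici_self)
  have htop : Tendsto F atTop (𝓝 1) :=
    (ProbabilityTheory.tendsto_cdf_atTop ν).congr fun x => (hFc x).symm
  have hbot : Tendsto F atBot (𝓝 0) :=
    (ProbabilityTheory.tendsto_cdf_atBot ν).congr fun x => (hFc x).symm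
  have hne : ∀ u : ℝ, u < 1 → {x : ℝ | u ≤ F x}.Nonempty := by
    intro u hu
    obtain ⟨x, hx⟩ := (htop.eventually (eventually_gt_nhds hu)).exists
    exact ⟨x, hx.le⟩
  have hbdd : ∀ u : ℝ, 0 < u → BddBelow {x : ℝ | u ≤ F x} := by
    intro u hu
    obtain ⟨x0, hx0⟩ := (hbot.eventually (eventually_lt_nhds hu)).exists
    refine ⟨x0, fun x hx => ?_⟩
    by_contra h
    exact absurd (le_trans hx (hmono (le_of_not_ge h))) (not_le.mpr hx0)
  have hgal : ∀ u ∈ Ioo (0:ℝ) 1, ∀ y : ℝ, Finv u ≤ y ↔ u ≤ F y := by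
    intro u hu y
    constructor
    · intro h
      have key : u ≤ F (Finv u) := by
        rw [hFinv]
        refine ge_of_tendsto (hrc _) ?_
        filter_upwards [self_mem_nhdsWithin] with x hx
        obtain ⟨s, hs, hsx⟩ := exists_lt_of_csInf_lt (hne u hu.2) hx
        exact le_trans hs (hmono hsx.le)
      exact key.trans (hmono h)
    · intro h
      rw [hFinv]
      exact csInf_le (hbdd u hu.1) h
  have hFinvMono : ∀ u u' : ℝ, 0 < u → u ≤ u' → u' < 1 → Finv u ≤ Finv u' := by
    intro u u' h0 hle h1
    rw [hFinv, hFinv]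
    exact csInf_le_csInf (hbdd u h0) (hne u' h1) fun x hx => le_trans hle hx
  have hfm : AEMeasurable Finv (volume.restrict (Ioo (0:ℝ) 1)) :=
    aemeasurable_restrict_of_monotoneOn measurableSet_Ioo
      (fun u hu u' hu' h => hFinvMono u u' hu.1 h hu'.2)
  have hF0 : ∀ y, 0 ≤ F y := fun y => by rw [hF]; exact ENNReal.toReal_nonneg
  -- distribution identity
  have hdist : ∀ y : ℝ, volume.restrict (Ioo (0:ℝ) 1) {u | y < Finv u} = μ {ω | y < X ω} := by
    intro y
    rw [Measure.restrict_apply' measurableSet_Ioo]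
    have hset : {u | y < Finv u} ∩ Ioo (0:ℝ) 1 = Ioo (F y) 1 := by
      ext u
      simp only [mem_inter_iff, mem_setOf_eq, mem_Ioo]
      constructor
      · rintro ⟨h1, h2, h3⟩
        refine ⟨?_, h3⟩
        by_contra h
        exact absurd ((hgal u ⟨h2, h3⟩ y).mpr (le_of_not_gt h)) (not_le.mpr h1)
      · rintro ⟨h1, h2⟩
        have h0 : 0 < u := lt_of_le_of_lt (hF0 y) h1
        refine ⟨?_, h0, h2⟩
        by_contra h
        exact absurd ((hgal u ⟨h0, h2⟩ y).mp (le_of_not_gt h)) (not_le.mpr h1)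
    rw [hset, Real.volume_Ioo]
    have hcompl : {ω | y < X ω} = {ω | X ω ≤ y}ᶜ := by ext ω; simp
    have hns : NullMeasurableSet {ω | X ω ≤ y} μ := hXm.nullMeasurable measurableSet_Iic
    rw [hcompl, measure_compl₀ hns (measure_ne_top μ _), measure_univ,
      show μ {ω | X ω ≤ y} = ENNReal.ofReal (F y) by
        rw [hF]; exact (ENNReal.ofReal_toReal (measure_ne_top μ _)).symm,
      ← ENNReal.ofReal_one, ← ENNReal.ofReal_sub _ (hF0 y)]
  -- lintegral layercake identity
  have hlkey : ∀ t : ℝ,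
      (∫⁻ u in Ioo (0:ℝ) 1, ENNReal.ofReal (max (Finv u - t) 0)) =
      ∫⁻ ω, ENNReal.ofReal (max (X ω - t) 0) ∂μ := by
    intro t
    have e1 := lintegral_eq_lintegral_meas_lt (volume.restrict (Ioo (0:ℝ) 1))
      (f := fun u => max (Finv u - t) 0) (Eventually.of_forall fun u => le_max_right _ _)
      ((hfm.sub aemeasurable_const).max aemeasurable_const)
    have e2 := lintegral_eq_lintegral_meas_lt μ
      (f := fun ω => max (X ω - t) 0) (Eventually.of_forall fun ω => le_max_right _ _)
      ((hXm.sub aemeasurable_const).max aemeasurable_const)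
    rw [e1, e2]
    refine setLIntegral_congr_fun measurableSet_Ioi (fun s hs => ?_)
    have h1 : {u | s < max (Finv u - t) 0} = {u | (t + s) < Finv u} := by
      ext u
      simp only [mem_setOf_eq, lt_max_iff]
      constructor
      · rintro (h | h); · linarith
        · exact absurd h (not_lt.mpr (mem_Ioi.mp hs).le)
      · intro h; left; linarith
    have h2 : {ω | s < max (X ω - t) 0} = {ω | (t + s) < X ω} := by
      ext ω
      simp only [mem_setOf_eq, lt_max_iff]
      constructor
      · rintro (h | h); · linarith
        · linarith [mem_Ioi.mp hs]
      · intro h; left; linarith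
    rw [h1, h2, hdist (t + s)]
  -- integrability of the stop-loss integrand on Ω
  have hXt : ∀ t : ℝ, Integrable (fun ω => max (X ω - t) 0) μ :=
    fun t => (hX.sub (integrable_const t)).pos_part
  -- integrability of the quantile stop-loss on (0,1)
  have hgmeas : ∀ t : ℝ, AEMeasurable (fun u => max (Finv u - t) 0)
      (volume.restrict (Ioo (0:ℝ) 1)) :=
    fun t => (hfm.sub aemeasurable_const).max aemeasurable_const
  have hgInt : ∀ t : ℝ, IntegrableOn (fun u => max (Finv u - t) 0) (Ioo (0:ℝ) 1) volume := by
    intro t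
    refine ⟨(hgmeas t).aestronglyMeasurable, ?_⟩
    refine (hasFiniteIntegral_iff_ofReal (f := fun u => max (Finv u - t) 0)
      (Eventually.of_forall fun u => le_max_right _ _)).mpr ?_
    rw [hlkey t]
    exact (hXt t).lintegral_lt_top
  -- Bochner version of the key identity
  have hgE : ∀ t : ℝ, (∫ u in Ioo (0:ℝ) 1, max (Finv u - t) 0) =
      ∫ ω, max (X ω - t) 0 ∂μ := by
    intro t
    have e1 := integral_eq_lintegral_of_nonneg_ae (μ := volume.restrict (Ioo (0:ℝ) 1))
      (f := fun u => max (Finv u - t) 0) (Eventually.of_forall fun u => le_max_right _ _)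
      (hgmeas t).aestronglyMeasurable
    have e2 := integral_eq_lintegral_of_nonneg_ae (μ := μ)
      (f := fun ω => max (X ω - t) 0) (Eventually.of_forall fun ω => le_max_right _ _)
      (hXt t).aestronglyMeasurable
    rw [e1, e2, hlkey t]
  -- integrability of Finv on (p,1)
  have hsub : Ioo p 1 ⊆ Ioo (0:ℝ) 1 := fun u hu => ⟨hp.1.trans hu.1, hu.2⟩
  have hfmp : AEMeasurable Finv (volume.restrict (Ioo p 1)) :=
    hfm.mono_measure (Measure.restrict_mono hsub le_rfl)
  have hvol : volume (Ioo p 1) < ⊤ := by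
    rw [Real.volume_Ioo]; exact ENNReal.ofReal_lt_top
  have hgIntp : ∀ t : ℝ, IntegrableOn (fun u => max (Finv u - t) 0) (Ioo p 1) volume :=
    fun t => (hgInt t).mono_set hsub
  set c := Finv p with hc
  have hFinvInt : IntegrableOn Finv (Ioo p 1) volume := by
    have hcint : IntegrableOn (fun _ : ℝ => |c|) (Ioo p 1) volume :=
      integrableOn_const hvol.ne
    refine Integrable.mono' ((hgIntp c).add hcint) hfmp.aestronglyMeasurable ?_
    filter_upwards [ae_restrict_mem measurableSet_Ioo] with u hu
    have h1 : c ≤ Finv u := hFinvMono p u hp.1 hu.1.le hu.2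
    have h2 : Finv u - c ≤ max (Finv u - c) 0 := le_max_left _ _
    rw [Real.norm_eq_abs, abs_le]
    simp only [Pi.add_apply]
    have h3 : (0:ℝ) ≤ max (Finv u - c) 0 := le_max_right _ _
    constructor
    · linarith [neg_abs_le c]
    · linarith [le_abs_self c]
  -- the constant integral
  have hconst : ∀ t : ℝ, (∫ _ in Ioo p 1, t) = t * (1 - p) := by
    intro t
    rw [setIntegral_const, Real.volume_real_Ioo_of_le (by linarith [hp.2])]
    rw [smul_eq_mul, mul_comm]
  -- main equality under the two pointwise conditions
  have hIeq : ∀ t : ℝ, (∀ u ∈ Ioo p 1, t ≤ Finv u) → (∀ u ∈ Ioo 0 p, Finv u ≤ t) →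
      (∫ u in Ioo p 1, Finv u) = (∫ ω, max (X ω - t) 0 ∂μ) + t * (1 - p) := by
    intro t h1 h2
    have step1 : (∫ u in Ioo p 1, Finv u)
        = ∫ u in Ioo p 1, (max (Finv u - t) 0 + t) := by
      refine setIntegral_congr_fun measurableSet_Ioo fun u hu => ?_
      rw [max_eq_left (by linarith [h1 u hu])]
      ring
    have step2 : (∫ u in Ioo p 1, (max (Finv u - t) 0 + t))
        = (∫ u in Ioo p 1, max (Finv u - t) 0) + t * (1 - p) := by
      rw [integral_add (hgIntp t) (integrableOn_const hvol.ne), hconst t]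
    have step3 : (∫ u in Ioo p 1, max (Finv u - t) 0)
        = ∫ u in Ioo (0:ℝ) 1, max (Finv u - t) 0 := by
      have hpne : ∀ᵐ u ∂volume.restrict (Ioo (0:ℝ) 1), u ≠ p := by
        rw [ae_iff]
        refine le_antisymm ?_ (by positivity)
        have : {u : ℝ | ¬u ≠ p} = {p} := by ext u; simp
        rw [this]
        exact le_trans (Measure.restrict_apply_le _ _) (le_of_eq Real.volume_singleton)
      have key : (∫ u in Ioo (0:ℝ) 1, max (Finv u - t) 0)
          = ∫ u in Ioo (0:ℝ) 1, (Ioo p 1).indicator (fun u => max (Finv u - t) 0) u := by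
        refine integral_congr_ae ?_
        filter_upwards [ae_restrict_mem measurableSet_Ioo, hpne] with u hu hup
        by_cases hmem : u ∈ Ioo p 1
        · rw [indicator_of_mem hmem]
        · rw [indicator_of_notMem hmem]
          have hup' : u < p := by
            rcases lt_trichotomy u p with h | h | h
            · exact h
            · exact absurd h hup
            · exact absurd ⟨h, hu.2⟩ hmem
          rw [max_eq_right (by linarith [h2 u ⟨hu.1, hup'⟩])]
      rw [key, setIntegral_indicator measurableSet_Ioo,
        inter_eq_self_of_subset_right hsub]
    rw [step1, step2, step3, hgE t]
  -- lower bound for all t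
  have hIle : ∀ t : ℝ, (∫ u in Ioo p 1, Finv u)
      ≤ (∫ ω, max (X ω - t) 0 ∂μ) + t * (1 - p) := by
    intro t
    have s1 : (∫ u in Ioo p 1, Finv u) ≤ ∫ u in Ioo p 1, (max (Finv u - t) 0 + t) := by
      refine setIntegral_mono_on hFinvInt
        ((hgIntp t).add (integrableOn_const hvol.ne)) measurableSet_Ioo
        fun u _ => ?_
      have := le_max_left (Finv u - t) 0
      linarith
    have s2 : (∫ u in Ioo p 1, (max (Finv u - t) 0 + t))
        = (∫ u in Ioo p 1, max (Finv u - t) 0) + t * (1 - p) := by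
      rw [integral_add (hgIntp t) (integrableOn_const hvol.ne), hconst t]
    have s3 : (∫ u in Ioo p 1, max (Finv u - t) 0)
        ≤ ∫ u in Ioo (0:ℝ) 1, max (Finv u - t) 0 :=
      setIntegral_mono_set (hgInt t)
        (Eventually.of_forall fun u => le_max_right _ _) (HasSubset.Subset.eventuallyLE hsub)
    calc (∫ u in Ioo p 1, Finv u) ≤ _ := s1
      _ = _ := s2
      _ ≤ (∫ u in Ioo (0:ℝ) 1, max (Finv u - t) 0) + t * (1 - p) := by linarith
      _ = _ := by rw [hgE t]
  -- rewrite the interval integral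
  have hI' : (∫ t in p..1, Finv t) = ∫ u in Ioo p 1, Finv u := by
    rw [intervalIntegral.integral_of_le hp.2.le, integral_Ioc_eq_integral_Ioo]
  -- attainment at t₀ = Finv p
  have heq0 : (∫ u in Ioo p 1, Finv u) = (∫ ω, max (X ω - c) 0 ∂μ) + c * (1 - p) :=
    hIeq c (fun u hu => hFinvMono p u hp.1 hu.1.le hu.2)
      (fun u hu => hFinvMono u p hu.1 hu.2.le hp.2)
  constructor
  · rw [hI']
    refine le_antisymm (le_ciInf hIle) ?_
    have hb : BddBelow (Set.range fun t : ℝ => (∫ ω, max (X ω - t) 0 ∂μ) + t * (1 - p)) := by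
      refine ⟨∫ u in Ioo p 1, Finv u, ?_⟩
      rintro y ⟨t, rfl⟩
      exact hIle t
    calc (⨅ t : ℝ, ((∫ ω, max (X ω - t) 0 ∂μ) + t * (1 - p)))
        ≤ (∫ ω, max (X ω - c) 0 ∂μ) + c * (1 - p) := ciInf_le hb c
      _ = ∫ u in Ioo p 1, Finv u := heq0.symm
  · intro t ht
    rw [hI']
    refine hIeq t ?_ ?_
    · intro u hu
      by_contra h
      have := (hgal u (hsub hu) t).mp (le_of_not_ge h)
      rw [ht] at this
      exact absurd this (not_le.mpr hu.1)
    · intro u hu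
      exact (hgal u ⟨hu.1, hu.2.trans hp.2⟩ t).mpr (by rw [ht]; exact hu.2.le)
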